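/- Let d be a K-quasi-metric on X and let (x_n) be a sequence with d(x_n, x) → ∞ for all finite x ∈ X. Then for any two distinct finite points y', z' ∈ X, (d(x_n,x_m)·d(y',z'))/(d(x_n,y')·d(x_m,z')) → 0 as n,m → ∞. Specifically, once d(x_n,y') ≥ d(y',z') and d(x_m,z') ≥ d(y',z'), one has (d(x_n,x_m)·d(y',z'))/(d(x_n,y')·d(x_m,z')) ≤ K²·d(y',z')/min(d(x_n,y'), d(x_m,z')). -/

import Mathlib

open Filter ENNReal

/-- Case 2 of the good-pair independence lemma: for a sequence
diverging to infinity, the c-component ratio tends to 0 for any two distinct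
finite points y', z'; moreover the explicit bound
K²·d(y',z')/min(d(x_n,y'),d(x_m,z')) holds once both distances exceed d(y',z'). -/
theorem mobius_cauchy_good_pair_diverging {X : Type*} (d : X → X → ℝ≥0∞) (K : ℝ≥0∞)
    (hK : 1 ≤ K) (hKfin : K ≠ ⊤)
    (hsymm : ∀ x y, d x y = d y x)
    (hzero : ∀ x y, d x y = 0 ↔ x = y)
    (hquasi : ∀ x y z, d x z ≤ K * max (d x y) (d y z))
    (ω : X)
    (hω : ∀ x, x ≠ ω → d x ω = ⊤)
    (hfin : ∀ x y, x ≠ ω → y ≠ ω → d x y ≠ ⊤)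
    (x : ℕ → X)
    (hdiv : ∀ x' : X, x' ≠ ω → Tendsto (fun n => d (x n) x') atTop (nhds ⊤))
    (y' z' : X) (hyz' : y' ≠ z') (hyω' : y' ≠ ω) (hzω' : z' ≠ ω) :
    Tendsto
      (fun p : ℕ × ℕ => d (x p.1) (x p.2) * d y' z' / (d (x p.1) y' * d (x p.2) z'))
      (atTop ×ˢ atTop) (nhds 0) ∧
    ∀ n m : ℕ, d y' z' ≤ d (x n) y' → d y' z' ≤ d (x m) z' →
      d (x n) (x m) * d y' z' / (d (x n) y' * d (x m) z') ≤
        K ^ 2 * d y' z' / min (d (x n) y') (d (x m) z') := by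
  have hc0 : d y' z' ≠ 0 := fun h => hyz' ((hzero _ _).1 h)
  have hc0t : d y' z' ≠ ⊤ := hfin _ _ hyω' hzω'
  have hKc : K ^ 2 * d y' z' ≠ ⊤ := ENNReal.mul_ne_top (pow_ne_top hKfin) hc0t
  -- the explicit bound
  have hbound : ∀ n m : ℕ, d y' z' ≤ d (x n) y' → d y' z' ≤ d (x m) z' →
      d (x n) (x m) * d y' z' / (d (x n) y' * d (x m) z') ≤
        K ^ 2 * d y' z' / min (d (x n) y') (d (x m) z') := by
    intro n m hn hm
    set a := d (x n) y' with ha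
    set b := d (x m) z' with hb
    have ha0 : a ≠ 0 := fun h => hc0 (le_antisymm (h ▸ hn) (zero_le))
    have hb0 : b ≠ 0 := fun h => hc0 (le_antisymm (h ▸ hm) (zero_le))
    by_cases htop : a = ⊤ ∨ b = ⊤
    · have : a * b = ⊤ := by
        rcases htop with h | h <;> simp [h, ENNReal.mul_eq_top, ha0, hb0]
      rw [this, ENNReal.div_top]
      exact zero_le
    push_neg at htop
    obtain ⟨hat, hbt⟩ := htop
    -- main quasi-metric chain
    have h1 : d y' (x m) ≤ K * b := by
      have := hquasi y' z' (x m)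
      rwa [hsymm z' (x m), ← hb, max_eq_right hm] at this
    have h2 : d (x n) (x m) ≤ K ^ 2 * max a b := by
      have := hquasi (x n) y' (x m)
      calc d (x n) (x m) ≤ K * max a (d y' (x m)) := this
        _ ≤ K * max a (K * b) := by
            gcongr
        _ ≤ K * (K * max a b) := by
            gcongr
            apply max_le
            · exact le_trans (le_mul_of_one_le_left' hK) (by gcongr; exact le_max_left _ _)
            · gcongr; exact le_max_right _ _
        _ = K ^ 2 * max a b := by ring
    calc d (x n) (x m) * d y' z' / (a * b)
        ≤ K ^ 2 * max a b * d y' z' / (a * b) := by gcongr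
      _ = max a b * (K ^ 2 * d y' z') / (max a b * min a b) := by
          rw [max_mul_min]; ring_nf
      _ = K ^ 2 * d y' z' / min a b := by
          rw [ENNReal.mul_div_mul_left _ _ (by simp [ha0]) (by simp [hat, hbt])]
  refine ⟨?_, hbound⟩
  have hc0lt : d y' z' < ⊤ := lt_top_iff_ne_top.2 hc0t
  have hev1 : ∀ᶠ n in atTop, d y' z' ≤ d (x n) y' :=
    Filter.Tendsto.eventually_const_le hc0lt (hdiv y' hyω')
  have hev2 : ∀ᶠ m in atTop, d y' z' ≤ d (x m) z' :=
    Filter.Tendsto.eventually_const_le hc0lt (hdiv z' hzω')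
  have hmin : Tendsto (fun p : ℕ × ℕ => min (d (x p.1) y') (d (x p.2) z'))
      (atTop ×ˢ atTop) (nhds ⊤) := by
    have t1 : Tendsto (fun p : ℕ × ℕ => d (x p.1) y') (atTop ×ˢ atTop) (nhds ⊤) :=
      (hdiv y' hyω').comp tendsto_fst
    have t2 : Tendsto (fun p : ℕ × ℕ => d (x p.2) z') (atTop ×ˢ atTop) (nhds ⊤) :=
      (hdiv z' hzω').comp tendsto_snd
    simpa using t1.min t2
  have hg : Tendsto (fun p : ℕ × ℕ => K ^ 2 * d y' z' / min (d (x p.1) y') (d (x p.2) z'))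
      (atTop ×ˢ atTop) (nhds 0) := by
    have := ENNReal.Tendsto.const_div (a := K ^ 2 * d y' z') hmin (Or.inr hKc)
    simpa using this
  apply tendsto_of_tendsto_of_tendsto_of_le_of_le' tendsto_const_nhds hg
  · exact Filter.Eventually.of_forall fun _ => zero_le
  · filter_upwards [hev1.prod_inl atTop, hev2.prod_inr atTop] with p h1 h2
    exact hbound p.1 p.2 h1 h2
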